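/- Let α, β ∈ (0, π] and define the subspace S(α,β) := {(v₁,v₂,v₃,v₄) ∈ ℝ⁴ | cos(α)·v₁ + sin(α)·v₂ = 0 and cos(β)·v₃ − sin(β)·v₄ = 0}, and let σ : ℝ⁴ → ℝ⁴ be the reflection map σ(v₁,v₂,v₃,v₄) = (v₃,−v₄,v₁,−v₂). Then σ maps S(α,β) onto S(α,β) if and only if α = β. (This is the separated-boundary-condition part of Proposition 4.2: the self-adjoint extensions with separated boundary conditions invariant under reflection about the midpoint are exactly those with α = β.) -/
import Mathlib


/-- Proposition 4.2 (separated boundary conditions): the reflection map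
`σ(v₁,v₂,v₃,v₄) = (v₃,−v₄,v₁,−v₂)` maps the separated boundary-condition subspace
`S(α,β)` onto itself if and only if `α = β`. -/
theorem stmt_0 (α β : ℝ) (hα : α ∈ Set.Ioc 0 Real.pi) (hβ : β ∈ Set.Ioc 0 Real.pi) :
    ((fun v : ℝ × ℝ × ℝ × ℝ => (v.2.2.1, -v.2.2.2, v.1, -v.2.1)) ''
        {v : ℝ × ℝ × ℝ × ℝ |
          Real.cos α * v.1 + Real.sin α * v.2.1 = 0 ∧
          Real.cos β * v.2.2.1 - Real.sin β * v.2.2.2 = 0} =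
      {v : ℝ × ℝ × ℝ × ℝ |
          Real.cos α * v.1 + Real.sin α * v.2.1 = 0 ∧
          Real.cos β * v.2.2.1 - Real.sin β * v.2.2.2 = 0}) ↔
    α = β := by
  constructor
  · intro h
    have hmem : (Real.sin β, -Real.cos β, Real.sin α, Real.cos α) ∈
        {v : ℝ × ℝ × ℝ × ℝ |
          Real.cos α * v.1 + Real.sin α * v.2.1 = 0 ∧
          Real.cos β * v.2.2.1 - Real.sin β * v.2.2.2 = 0} := by
      rw [← h]
      exact ⟨(Real.sin α, -Real.cos α, Real.sin β, Real.cos β),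
        ⟨by ring, by ring⟩, by simp⟩
    have h1 : Real.sin (β - α) = 0 := by
      have := hmem.1
      rw [Real.sin_sub]
      simp only [Set.mem_setOf_eq] at this
      linarith
    have h2 : β - α = 0 := by
      rcases Real.sin_eq_zero_iff.mp h1 with ⟨n, hn⟩
      obtain ⟨hα1, hα2⟩ := hα
      obtain ⟨hβ1, hβ2⟩ := hβ
      have hpi := Real.pi_pos
      have hpos : (0:ℝ) < Real.pi := hpi
      have hl : (n:ℝ) < 1 := by nlinarith
      have hg : (-1:ℝ) < (n:ℝ) := by nlinarith
      have hl' : n < 1 := by exact_mod_cast hl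
      have hg' : -1 < n := by exact_mod_cast hg
      have : n = 0 := by omega
      rw [this] at hn
      simpa [eq_comm] using hn
    linarith
  · rintro rfl
    ext ⟨v1, v2, v3, v4⟩
    simp only [Set.mem_image, Set.mem_setOf_eq, Prod.mk.injEq, Prod.exists]
    constructor
    · rintro ⟨a, b, c, d, ⟨h1, h2⟩, he1, he2, he3, he4⟩
      subst he1; subst he3; subst he2; subst he4
      constructor <;> linarith
    · rintro ⟨h1, h2⟩
      exact ⟨v3, -v4, v1, -v2, ⟨by linarith, by linarith⟩, rfl, by ring, rfl, by ring⟩
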